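/- For every N ≥ 1 and every configuration of distinct points x₁, …, x_N ∈ 𝕋, there exists a configuration y₁, …, y_N ∈ 𝕋 such that: (i) min_{j≠k} |e^{iy_j} − e^{iy_k}| ≥ 2/(5N⁴); (ii) Σ_{j=1}^N |e^{ix_j} − e^{iy_j}| ≤ 1; and (iii) Σ_{j≠k} log(1/|e^{ix_j} − e^{ix_k}|) ≥ Σ_{j≠k} log(1/|e^{iy_j} − e^{iy_k}|) − N. -/

import Mathlib

open MeasureTheory Filter Finset
open scoped Real ENNReal Topology

noncomputable section

/-- Fundamental domain for the torus `𝕋 = ℝ/(2πℤ)`. -/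
def torusSet : Set ℝ := Set.Ioc (-Real.pi) Real.pi

/-- Lebesgue measure `dx` on the torus. -/
def lebT : Measure ℝ := volume.restrict torusSet

/-- The metric `(x,y) ↦ |e^{ix} - e^{iy}|` on the torus. -/
def torusDist (x y : ℝ) : ℝ :=
  ‖Complex.exp ((x : ℂ) * Complex.I) - Complex.exp ((y : ℂ) * Complex.I)‖

/-- The logarithmic kernel `log |sin((x-y)/2)|⁻¹`. -/
def logKernel (x y : ℝ) : ℝ := Real.log |Real.sin ((x - y) / 2)|⁻¹

/-- Logarithmic energy of a measure, in `[0,∞]`. -/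
def energy (μ : Measure ℝ) : ℝ≥0∞ := ∫⁻ x, ∫⁻ y, ENNReal.ofReal (logKernel x y) ∂μ ∂μ

/-- Cross logarithmic energy of two measures. -/
def crossEnergy (μ ν : Measure ℝ) : ℝ≥0∞ := ∫⁻ x, ∫⁻ y, ENNReal.ofReal (logKernel x y) ∂ν ∂μ

/-- Logarithmic potential `U^μ`. -/
def potential (μ : Measure ℝ) (x : ℝ) : ℝ≥0∞ := ∫⁻ y, ENNReal.ofReal (logKernel x y) ∂μ

-- Relative entropy `K(μ|ν) ∈ [0,∞]`.
open Classical in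
def relEntropy (μ ν : Measure ℝ) : ℝ≥0∞ :=
  if μ ≪ ν ∧ Integrable (fun x => Real.log ((μ.rnDeriv ν x).toReal)) μ then
    ENNReal.ofReal (∫ x, Real.log ((μ.rnDeriv ν x).toReal) ∂μ)
  else ⊤

/-- The reference measure `μ₀^V = e^{-V(x)} dx/(2π)`. -/
def mu0 (V : ℝ → ℝ) : Measure ℝ :=
  lebT.withDensity fun x => ENNReal.ofReal ((2 * Real.pi)⁻¹ * Real.exp (-V x))

/-- The free energy functional `F_β^V = β E(μ) + K(μ|μ₀^V)`. -/
def freeEnergy (β : ℝ) (V : ℝ → ℝ) (μ : Measure ℝ) : ℝ≥0∞ :=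
  ENNReal.ofReal β * energy μ + relEntropy μ (mu0 V)

/-- Probability measure on the torus. -/
def IsTorusProb (μ : Measure ℝ) : Prop := IsProbabilityMeasure μ ∧ μ torusSetᶜ = 0

/-- `μ` is the equilibrium measure: a minimizer of `F_β^V`. -/
def IsEquilibrium (β : ℝ) (V : ℝ → ℝ) (μ : Measure ℝ) : Prop :=
  IsTorusProb μ ∧ ∀ ν : Measure ℝ, IsTorusProb ν → freeEnergy β V μ ≤ freeEnergy β V ν

/-- Uniform probability measure `dx/(2π)` on the torus. -/
def unifT : Measure ℝ := lebT.withDensity fun _ => ENNReal.ofReal (2 * Real.pi)⁻¹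

/-- Truncated Hilbert-transform integral. -/
def pvHilbert (ψ : ℝ → ℝ) (x ε : ℝ) : ℝ :=
  -(2 * Real.pi)⁻¹ * ∫ t in {t : ℝ | t ∈ torusSet ∧ ε < torusDist x t}, ψ t / Real.tan ((x - t) / 2)

/-- Hilbert transform on the torus (principal value). -/
def HT (ψ : ℝ → ℝ) (x : ℝ) : ℝ := limUnder (𝓝[>] (0 : ℝ)) (pvHilbert ψ x)

/-- The space `C^{m,1}(𝕋)`. -/
def ContDiffLipT (m : ℕ) (f : ℝ → ℝ) : Prop :=
  Function.Periodic f (2 * Real.pi) ∧ ContDiff ℝ m f ∧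
    ∃ L : ℝ, ∀ x y, |iteratedDeriv m f x - iteratedDeriv m f y| ≤ L * torusDist x y

/-- Lipschitz seminorm with respect to the torus metric. -/
def lipConstT (f : ℝ → ℝ) : ℝ := sInf {L : ℝ | 0 ≤ L ∧ ∀ x y, |f x - f y| ≤ L * torusDist x y}

/-- Sobolev space `H¹(𝕋)` (absolutely continuous representative, weak derivative in `L²`). -/
def MemH1T (f : ℝ → ℝ) : Prop :=
  Function.Periodic f (2 * Real.pi) ∧ Continuous f ∧
    ∃ g : ℝ → ℝ, MemLp g 2 lebT ∧ ∀ x, f x = f (-Real.pi) + ∫ t in (-Real.pi)..x, g t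

/-- Sobolev space `H²(𝕋)`. -/
def MemH2T (f : ℝ → ℝ) : Prop :=
  Function.Periodic f (2 * Real.pi) ∧ Differentiable ℝ f ∧
    ∃ g : ℝ → ℝ, MemLp g 2 lebT ∧ ∀ x, deriv f x = deriv f (-Real.pi) + ∫ t in (-Real.pi)..x, g t

/-- The operator `ℒφ = -φ'' - 2πβ H(μ_β^V φ') - (log μ_β^V)' φ'`. -/
def Lop (β : ℝ) (dens : ℝ → ℝ) (φ : ℝ → ℝ) (x : ℝ) : ℝ :=
  -(deriv (deriv φ) x) - 2 * Real.pi * β * HT (fun y => dens y * deriv φ y) x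
    - deriv (fun y => Real.log (dens y)) x * deriv φ x

/-- Fourier coefficients on the torus. -/
def fourierCoefT (ψ : ℝ → ℝ) (k : ℤ) : ℂ :=
  (2 * Real.pi : ℂ)⁻¹ * ∫ x in torusSet, (ψ x : ℂ) * Complex.exp (-(k : ℂ) * (x : ℂ) * Complex.I)

/-- Reference product measure on `𝕋^N`. -/
def refN (N : ℕ) : Measure (Fin N → ℝ) := Measure.pi fun _ => lebT

/-- Interaction weight of the Gibbs measure. -/
def interWeight (β : ℝ) (V : ℝ → ℝ) (N : ℕ) (x : Fin N → ℝ) : ℝ :=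
  (∏ p ∈ Finset.univ.offDiag, torusDist (x p.1) (x p.2) ^ (β / N)) *
    ∏ i, Real.exp (-V (x i))

/-- Partition function. -/
def ZN (β : ℝ) (V : ℝ → ℝ) (N : ℕ) : ℝ≥0∞ :=
  ∫⁻ x, ENNReal.ofReal (interWeight β V N x) ∂refN N

/-- The Gibbs measure `ℙ_N`. -/
def PN (β : ℝ) (V : ℝ → ℝ) (N : ℕ) : Measure (Fin N → ℝ) :=
  (ZN β V N)⁻¹ • (refN N).withDensity fun x => ENNReal.ofReal (interWeight β V N x)

/-- Empirical measure of a configuration. -/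
def empMeasure (N : ℕ) (x : Fin N → ℝ) : Measure ℝ := (N : ℝ≥0∞)⁻¹ • ∑ i, Measure.dirac (x i)

/-- Wasserstein-1 distance via Kantorovich-Rubinstein duality. -/
def W1 (μ ν : Measure ℝ) : ℝ :=
  sSup {d : ℝ | ∃ f : ℝ → ℝ, (∀ x y, |f x - f y| ≤ torusDist x y) ∧
    d = (∫ z, f z ∂μ) - ∫ z, f z ∂ν}

/-- Linear statistics fluctuation `ν_N(ψ)` as a function on `𝕋^N`. -/
def nuNf (μ : Measure ℝ) (N : ℕ) (ψ : ℝ → ℝ) (x : Fin N → ℝ) : ℝ :=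
  Real.sqrt N * ((N : ℝ)⁻¹ * ∑ i, ψ (x i) - ∫ y, ψ y ∂μ)

/-- Partial derivative in coordinate `j`. -/
def pderiv (N : ℕ) (f : (Fin N → ℝ) → ℝ) (j : Fin N) (x : Fin N → ℝ) : ℝ :=
  deriv (fun t => f (Function.update x j t)) (x j)

/-- Second partial derivative in coordinate `j`. -/
def pderiv2 (N : ℕ) (f : (Fin N → ℝ) → ℝ) (j : Fin N) (x : Fin N → ℝ) : ℝ :=
  iteratedDeriv 2 (fun t => f (Function.update x j t)) (x j)

/-- Generator `ℒ_N`. -/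
def genL (N : ℕ) (β : ℝ) (V : ℝ → ℝ) (f : (Fin N → ℝ) → ℝ) (x : Fin N → ℝ) : ℝ :=
  (∑ j, pderiv2 N f j x)
    + (β / N) * ∑ p ∈ Finset.univ.offDiag, pderiv N f p.1 x / Real.tan ((x p.1 - x p.2) / 2)
    - ∑ j, deriv V (x j) * pderiv N f j x

/-- Kernel `(g(x) - g(y))/(2 tan((x-y)/2))`, with diagonal value `g'(x)`. -/
def Kdiag (g : ℝ → ℝ) (x y : ℝ) : ℝ :=
  if Real.sin ((x - y) / 2) = 0 then deriv g x else (g x - g y) / (2 * Real.tan ((x - y) / 2))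

/-- Double integral of a kernel against `ν_N ⊗ ν_N`. -/
def doubleNu (μ : Measure ℝ) (N : ℕ) (K : ℝ → ℝ → ℝ) (x : Fin N → ℝ) : ℝ :=
  (N : ℝ) * (((N : ℝ)⁻¹) ^ 2 * ∑ i, ∑ j, K (x i) (x j)
    - (N : ℝ)⁻¹ * ∑ i, ∫ y, K (x i) y ∂μ
    - (N : ℝ)⁻¹ * ∑ j, ∫ y, K y (x j) ∂μ
    + ∫ y, ∫ z, K y z ∂μ ∂μ)

/-- The error term `ζ_N(φ)`. -/
def zetaN (μ : Measure ℝ) (N : ℕ) (φ : ℝ → ℝ) (x : Fin N → ℝ) : ℝ :=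
  doubleNu μ N (Kdiag (deriv φ)) x - (N : ℝ)⁻¹ * ∑ i, deriv (deriv φ) (x i)

/-- Weak formulation of `ℒu = f`. -/
def WeakLSol (β : ℝ) (dens : ℝ → ℝ) (μ : Measure ℝ) (u f : ℝ → ℝ) : Prop :=
  ∀ χ : ℝ → ℝ, ContDiff ℝ 1 χ → Function.Periodic χ (2 * Real.pi) →
    (∫ x, deriv u x * deriv χ x ∂μ)
      - 2 * Real.pi * β * ∫ x, HT (fun y => dens y * deriv u y) x * χ x ∂μ
      = ∫ x, f x * χ x ∂μ

end
lemma torusDist_eq (a b : ℝ) : torusDist a b = 2 * |Real.sin ((a - b) / 2)| := by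
  unfold torusDist
  have h : Complex.exp ((a : ℂ) * Complex.I) - Complex.exp ((b : ℂ) * Complex.I)
      = Complex.exp ((b : ℂ) * Complex.I) * (Complex.exp (((a - b : ℝ) : ℂ) * Complex.I) - 1) := by
    rw [mul_sub, ← Complex.exp_add, mul_one]
    push_cast
    ring_nf
  rw [h, norm_mul]
  rw [Complex.norm_exp_ofReal_mul_I, one_mul]
  set u : ℝ := a - b with hu
  have he : Complex.exp ((u : ℂ) * Complex.I) - 1
      = Complex.ofReal (Real.cos u - 1) + Complex.ofReal (Real.sin u) * Complex.I := by
    rw [Complex.exp_mul_I, ← Complex.ofReal_cos, ← Complex.ofReal_sin]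
    push_cast
    ring
  rw [he, Complex.norm_def, Complex.normSq_add_mul_I]
  have hs : Real.sin (u / 2) ^ 2 = 1 / 2 - Real.cos u / 2 := by
    have := Real.sin_sq_eq_half_sub (u / 2)
    rwa [show 2 * (u / 2) = u by ring] at this
  have : (Real.cos u - 1) ^ 2 + Real.sin u ^ 2 = (2 * |Real.sin (u / 2)|) ^ 2 := by
    rw [mul_pow, sq_abs]
    nlinarith [Real.sin_sq_add_cos_sq u]
  rw [this, Real.sqrt_sq (by positivity)]

lemma torusDist_comm (a b : ℝ) : torusDist a b = torusDist b a := norm_sub_rev _ _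

lemma torusDist_period (a b : ℝ) (n : ℤ) : torusDist (a - 2 * π * n) b = torusDist a b := by
  rw [torusDist_eq, torusDist_eq]
  have : (a - 2 * π * n - b) / 2 = (a - b) / 2 - n * π := by ring
  rw [this, Real.sin_sub_int_mul_pi, abs_mul]
  rcases Int.even_or_odd n with h | h
  · rw [h.neg_one_zpow]; simp
  · rw [h.neg_one_zpow]; simp

lemma torusDist_nonneg (a b : ℝ) : 0 ≤ torusDist a b := norm_nonneg _

lemma torusDist_le_abs (a b : ℝ) : torusDist a b ≤ |a - b| := by
  rw [torusDist_eq]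
  calc 2 * |Real.sin ((a - b) / 2)| ≤ 2 * |(a - b) / 2| := by
        have := Real.abs_sin_le_abs (x := (a - b) / 2); linarith
    _ = |a - b| := by rw [abs_div]; simp; ring

lemma torusDist_of_nonneg {a b : ℝ} (h0 : 0 ≤ b - a) (h2 : b - a ≤ 2 * π) :
    torusDist a b = 2 * Real.sin ((b - a) / 2) := by
  rw [torusDist_comm, torusDist_eq, abs_of_nonneg]
  exact Real.sin_nonneg_of_nonneg_of_le_pi (by linarith) (by linarith)

lemma sin_scale {u l : ℝ} (hu0 : 0 ≤ u) (huπ : u ≤ π) (hl0 : 0 ≤ l) (hl1 : l ≤ 1) :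
    l * Real.sin u ≤ Real.sin (l * u) := by
  have h := strictConcaveOn_sin_Icc.concaveOn.2
    (Set.mem_Icc.2 ⟨le_rfl, Real.pi_pos.le⟩ : (0:ℝ) ∈ Set.Icc 0 π) (Set.mem_Icc.2 ⟨hu0, huπ⟩)
    (sub_nonneg.2 hl1) hl0 (by ring)
  simpa using h
lemma key_sin {Δ Δ' c : ℝ} (hc : 0 < c) (hΔ0 : 0 ≤ Δ) (hΔ2 : Δ < 2*π)
    (h1 : c*Δ ≤ Δ') (h2 : c*(2*π - Δ) ≤ 2*π - Δ') (hΔ'0 : 0 < Δ') :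
    c * Real.sin (Δ/2) ≤ Real.sin (Δ'/2) := by
  have hπ := Real.pi_pos
  have hsin : 0 ≤ Real.sin (Δ/2) :=
    Real.sin_nonneg_of_nonneg_of_le_pi (by linarith) (by linarith)
  rcases le_or_gt Δ' Δ with hle | hlt
  · have hΔpos : 0 < Δ := lt_of_lt_of_le hΔ'0 hle
    have hl1 : Δ'/Δ ≤ 1 := (div_le_one hΔpos).2 hle
    have hlc : c ≤ Δ'/Δ := (le_div_iff₀ hΔpos).2 (by linarith)
    have h := sin_scale (u := Δ/2) (l := Δ'/Δ) (by linarith) (by linarith)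
      (le_trans hc.le hlc) hl1
    rw [show (Δ'/Δ)*(Δ/2) = Δ'/2 by field_simp] at h
    nlinarith [mul_le_mul_of_nonneg_right hlc hsin]
  · have hw : 0 < 2*π - Δ := by linarith
    have hl1 : (2*π - Δ')/(2*π - Δ) ≤ 1 := (div_le_one hw).2 (by linarith)
    have hlc : c ≤ (2*π - Δ')/(2*π - Δ) := (le_div_iff₀ hw).2 (by linarith)
    have h := sin_scale (u := (2*π - Δ)/2) (l := (2*π - Δ')/(2*π - Δ)) (by linarith)
      (by linarith) (le_trans hc.le hlc) hl1
    rw [show ((2*π - Δ')/(2*π - Δ))*((2*π - Δ)/2) = (2*π - Δ')/2 by field_simp] at h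
    rw [show (2*π - Δ')/2 = π - Δ'/2 by ring, Real.sin_pi_sub] at h
    rw [show (2*π - Δ)/2 = π - Δ/2 by ring, Real.sin_pi_sub] at h
    nlinarith [mul_le_mul_of_nonneg_right hlc hsin]

lemma sep_sin {Δ' a : ℝ} (ha : 0 < a) (h1 : a ≤ Δ') (h2 : a ≤ 2*π - Δ') :
    a/π ≤ Real.sin (Δ'/2) := by
  have hπ := Real.pi_pos
  rcases le_or_gt Δ' π with hle | hlt
  · have h := Real.mul_le_sin (x := Δ'/2) (by linarith) (by linarith)
    have : a/π ≤ 2/π * (Δ'/2) := by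
      rw [show 2/π * (Δ'/2) = Δ'/π by ring]
      gcongr
    linarith
  · have h := Real.mul_le_sin (x := π - Δ'/2) (by linarith) (by linarith)
    rw [Real.sin_pi_sub] at h
    have : a/π ≤ 2/π * (π - Δ'/2) := by
      rw [show 2/π * (π - Δ'/2) = (2*π - Δ')/π by ring]
      gcongr
    linarith


set_option maxHeartbeats 1000000 in
/-- Regularization of a configuration of distinct points on the torus:
well-separated points, close to the original ones, with almost smaller logarithmic
interaction energy. -/
theorem configuration_regularization
    (N : ℕ) (hN : 1 ≤ N) (x : Fin N → ℝ)
    (hdist : ∀ i j : Fin N, i ≠ j → torusDist (x i) (x j) ≠ 0) :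
    ∃ y : Fin N → ℝ,
      (∀ i j : Fin N, i ≠ j → 2 / (5 * (N : ℝ) ^ 4) ≤ torusDist (y i) (y j)) ∧
      (∑ i, torusDist (x i) (y i)) ≤ 1 ∧
      (∑ p ∈ Finset.univ.offDiag, Real.log (torusDist (y p.1) (y p.2))⁻¹) - N ≤
        ∑ p ∈ Finset.univ.offDiag, Real.log (torusDist (x p.1) (x p.2))⁻¹ := by
  have hπ := Real.pi_pos
  set n : ℝ := (N : ℝ) with hndef
  have hn1 : (1:ℝ) ≤ n := by rw [hndef]; exact_mod_cast hN
  have hn0 : (0:ℝ) < n := by linarith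
  obtain ⟨δ, hδdef⟩ : ∃ d : ℝ, d = (2 * n ^ 2)⁻¹ := ⟨_, rfl⟩
  have hδ : 0 < δ := by rw [hδdef]; positivity
  have hnδ : n * δ = (2 * n)⁻¹ := by rw [hδdef]; field_simp
  have hnδ2 : n * δ ≤ 1/2 := by rw [hnδ]; rw [inv_le_comm₀ (by positivity) (by norm_num)]; linarith
  obtain ⟨c, hcdef⟩ : ∃ d : ℝ, d = 2 * π / (2 * π + n * δ) := ⟨_, rfl⟩
  have hden : 0 < 2 * π + n * δ := by positivity
  have hc : 0 < c := by rw [hcdef]; positivity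
  have hc1 : c ≤ 1 := by rw [hcdef, div_le_one hden]; nlinarith
  have hkey : c * (2 * π + n * δ) = 2 * π := by rw [hcdef]; field_simp
  -- normalized points
  obtain ⟨x', hx'def⟩ : ∃ f : Fin N → ℝ, ∀ i, f i = 2 * π * Int.fract (x i / (2 * π)) :=
    ⟨_, fun _ => rfl⟩
  have hx'mem : ∀ i, 0 ≤ x' i ∧ x' i < 2 * π := by
    intro i
    rw [hx'def]
    constructor
    · exact mul_nonneg (by positivity) (Int.fract_nonneg _)
    · have := Int.fract_lt_one (x i / (2 * π))
      calc 2 * π * Int.fract (x i / (2 * π)) < 2 * π * 1 :=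
            mul_lt_mul_of_pos_left this (by positivity)
        _ = 2 * π := mul_one _
  have hx'd : ∀ i t, torusDist (x' i) t = torusDist (x i) t := by
    intro i t
    have : x' i = x i - 2 * π * (⌊x i / (2 * π)⌋ : ℤ) := by
      have hf : Int.fract (x i / (2 * π)) = x i / (2 * π) - ⌊x i / (2 * π)⌋ :=
        (Int.self_sub_floor _).symm
      rw [hx'def, hf]
      field_simp
    rw [this, torusDist_period]
  have hxx' : ∀ a b, torusDist (x a) (x b) = torusDist (x' a) (x' b) := by
    intro a b
    rw [← hx'd a, torusDist_comm, ← hx'd b, torusDist_comm]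
  set σ := Tuple.sort x' with hσdef
  obtain ⟨θ, hθdef⟩ : ∃ f : Fin N → ℝ, ∀ k, f k = x' (σ k) := ⟨_, fun _ => rfl⟩
  have hmono : Monotone θ := by
    have h := Tuple.monotone_sort x'
    intro a b hab
    rw [hθdef, hθdef]
    exact h hab
  have hθmem : ∀ k, 0 ≤ θ k ∧ θ k < 2 * π := fun k => (hθdef k) ▸ hx'mem (σ k)
  have hz : 0 < N := hN
  set z : Fin N := ⟨0, hz⟩ with hzdef
  obtain ⟨ψ, hψdef⟩ : ∃ f : Fin N → ℝ, ∀ k, f k = θ z + c * (θ k - θ z) + c * ((k : ℕ) : ℝ) * δ :=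
    ⟨_, fun _ => rfl⟩
  -- the key pairwise estimate
  have pair : ∀ j k : Fin N, (j : ℕ) < (k : ℕ) →
      c * torusDist (θ j) (θ k) ≤ torusDist (ψ j) (ψ k) ∧
      2 * (c * δ) / π ≤ torusDist (ψ j) (ψ k) := by
    intro j k hjk
    have hθjk : θ j ≤ θ k := hmono (by exact le_of_lt hjk)
    have hΔ0 : 0 ≤ θ k - θ j := by linarith
    have hΔ2 : θ k - θ j < 2 * π := by
      have h1 := (hθmem k).2; have h2 := (hθmem j).1; linarith
    set Δ : ℝ := θ k - θ j with hΔdef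
    set m : ℝ := ((k : ℕ) : ℝ) - ((j : ℕ) : ℝ) with hmdef
    have hm1 : 1 ≤ m := by
      rw [hmdef]
      have : (j : ℕ) + 1 ≤ (k : ℕ) := hjk
      have := (Nat.cast_le (α := ℝ)).2 this
      push_cast at this ⊢
      linarith
    have hmn : m ≤ n - 1 := by
      rw [hmdef, hndef]
      have hk := k.isLt
      have : (k : ℕ) + 1 ≤ N := hk
      have h1 := (Nat.cast_le (α := ℝ)).2 this
      have h2 : (0:ℝ) ≤ ((j : ℕ) : ℝ) := Nat.cast_nonneg _
      push_cast at h1 ⊢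
      linarith
    have hψdiff : ψ k - ψ j = c * Δ + c * m * δ := by
      rw [hψdef, hψdef, hΔdef, hmdef]; ring
    have hcδ : 0 < c * δ := mul_pos hc hδ
    have hΔ'low : c * δ ≤ ψ k - ψ j := by
      rw [hψdiff]
      nlinarith [mul_nonneg hc.le hΔ0, mul_nonneg (mul_nonneg hc.le (sub_nonneg.2 hm1)) hδ.le]
    have hΔ'0 : 0 < ψ k - ψ j := lt_of_lt_of_le (by positivity) hΔ'low
    have h2' : c * (2 * π - Δ) + c * δ ≤ 2 * π - (ψ k - ψ j) := by
      rw [hψdiff]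
      nlinarith [hkey, mul_nonneg (mul_nonneg hc.le hδ.le) (sub_nonneg.2 hmn)]
    have hΔ'up : c * δ ≤ 2 * π - (ψ k - ψ j) := by
      nlinarith [mul_nonneg hc.le (by linarith : (0:ℝ) ≤ 2 * π - Δ)]
    have hdψ : torusDist (ψ j) (ψ k) = 2 * Real.sin ((ψ k - ψ j) / 2) :=
      torusDist_of_nonneg hΔ'0.le (by linarith [hcδ])
    have hdθ : torusDist (θ j) (θ k) = 2 * Real.sin (Δ / 2) :=
      torusDist_of_nonneg hΔ0 (by linarith)
    constructor
    · rw [hdψ, hdθ]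
      have := key_sin (Δ := Δ) (Δ' := ψ k - ψ j) hc hΔ0 hΔ2
        (by rw [hψdiff]
            nlinarith [mul_nonneg (mul_nonneg hc.le (by linarith : (0:ℝ) ≤ m)) hδ.le])
        (by linarith) hΔ'0
      linarith
    · rw [hdψ]
      have := sep_sin (Δ' := ψ k - ψ j) (a := c * δ) (by positivity) hΔ'low hΔ'up
      rw [div_le_iff₀ hπ] at this ⊢
      linarith
  have pair' : ∀ j k : Fin N, j ≠ k →
      c * torusDist (θ j) (θ k) ≤ torusDist (ψ j) (ψ k) ∧
      2 * (c * δ) / π ≤ torusDist (ψ j) (ψ k) := by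
    intro j k hjk
    have hne : (j : ℕ) ≠ (k : ℕ) := fun h => hjk (Fin.ext h)
    rcases lt_or_gt_of_ne hne with h | h
    · exact pair j k h
    · have := pair k j h
      rw [torusDist_comm (θ j), torusDist_comm (ψ j)]
      exact this
  refine ⟨fun i => ψ (σ.symm i), ?_, ?_, ?_⟩
  · -- separation
    intro i j hij
    have h2N : 2 ≤ N := by
      have h1 := i.isLt; have h2 := j.isLt
      have : (i : ℕ) ≠ (j : ℕ) := fun h => hij (Fin.ext h)
      omega
    have h2n : (2:ℝ) ≤ n := by rw [hndef]; exact_mod_cast h2N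
    have hne : σ.symm i ≠ σ.symm j := fun h => hij (by simpa using congrArg σ h)
    have hp := (pair' _ _ hne).2
    refine le_trans ?_ hp
    have hπ315 : π < 3.15 := Real.pi_lt_d2
    rw [div_le_div_iff₀ (by positivity) hπ]
    have e2 : 2 * (c * δ) * (5 * n ^ 4) = c * (5 * n ^ 2) := by
      rw [hδdef]; field_simp
    rw [e2]
    have hfac : 0 ≤ 5 * n ^ 2 - 2 * π - n * δ := by nlinarith
    nlinarith [hkey, mul_nonneg hc.le hfac]
  · -- displacement
    have hzlek : ∀ k : Fin N, θ z ≤ θ k := by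
      intro k
      exact hmono (by simp [hzdef, Fin.le_def])
    have hbd : ∀ k : Fin N, torusDist (x (σ k)) (ψ k) ≤ n * δ := by
      intro k
      have h0 : torusDist (x (σ k)) (ψ k) = torusDist (θ k) (ψ k) := by
        rw [hθdef, hx'd]
      rw [h0]
      refine le_trans (torusDist_le_abs _ _) ?_
      rw [abs_le]
      have h1 : θ k - ψ k = (1 - c) * (θ k - θ z) - c * ((k : ℕ) : ℝ) * δ := by
        rw [hψdef k]; ring
      have h2 : 0 ≤ θ k - θ z := by linarith [hzlek k]
      have h3 : θ k - θ z ≤ 2 * π := by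
        linarith [(hθmem k).2, (hθmem z).1]
      have h4 : (1 - c) * (2 * π) = c * (n * δ) := by nlinarith [hkey]
      have h5 : ((k : ℕ) : ℝ) ≤ n := by
        rw [hndef]
        exact_mod_cast (k.isLt).le
      have h6 : (0:ℝ) ≤ ((k : ℕ) : ℝ) := Nat.cast_nonneg _
      have h1c : 0 ≤ 1 - c := by linarith
      have h7 : c * ((k : ℕ) : ℝ) * δ ≤ n * δ := by
        have ha : c * ((k : ℕ) : ℝ) ≤ ((k : ℕ) : ℝ) := mul_le_of_le_one_left h6 hc1
        have hb : ((k : ℕ) : ℝ) * δ ≤ n * δ := mul_le_mul_of_nonneg_right h5 hδ.le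
        nlinarith
      have h8 : (1 - c) * (θ k - θ z) ≤ n * δ := by
        have := mul_le_mul_of_nonneg_left h3 h1c
        nlinarith [hkey, mul_nonneg h1c (mul_nonneg hn0.le hδ.le)]
      constructor
      · rw [h1]
        have := mul_nonneg h1c h2
        linarith
      · rw [h1]
        have h9 : 0 ≤ c * ((k : ℕ) : ℝ) * δ := by positivity
        linarith
    have hsum : ∑ i, torusDist (x i) (ψ (σ.symm i)) = ∑ k, torusDist (x (σ k)) (ψ k) := by
      rw [← Equiv.sum_comp σ (fun i => torusDist (x i) (ψ (σ.symm i)))]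
      refine Finset.sum_congr rfl fun k _ => ?_
      simp
    calc ∑ i, torusDist (x i) (ψ (σ.symm i)) = ∑ k, torusDist (x (σ k)) (ψ k) := hsum
      _ ≤ ∑ _k : Fin N, n * δ := Finset.sum_le_sum fun k _ => hbd k
      _ = n * (n * δ) := by
          rw [Finset.sum_const, Finset.card_univ, Fintype.card_fin, nsmul_eq_mul, hndef]
      _ ≤ 1 := by rw [hnδ]; rw [show n * (2 * n)⁻¹ = 1/2 by field_simp]; norm_num
  · -- energy
    have hstepy : ∑ q ∈ Finset.univ.offDiag, Real.log (torusDist (ψ q.1) (ψ q.2))⁻¹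
        = ∑ p ∈ Finset.univ.offDiag,
            Real.log (torusDist (ψ (σ.symm p.1)) (ψ (σ.symm p.2)))⁻¹ := by
      refine Finset.sum_equiv (Equiv.prodCongr σ σ) ?_ ?_
      · intro q
        simp [Finset.mem_offDiag]
      · intro q _
        simp
    have hstepx : ∑ q ∈ Finset.univ.offDiag, Real.log (torusDist (θ q.1) (θ q.2))⁻¹
        = ∑ p ∈ Finset.univ.offDiag, Real.log (torusDist (x p.1) (x p.2))⁻¹ := by
      refine Finset.sum_equiv (Equiv.prodCongr σ σ) ?_ ?_
      · intro q
        simp [Finset.mem_offDiag]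
      · intro q _
        simp only [Equiv.prodCongr_apply, Prod.map]
        rw [hxx', ← hθdef, ← hθdef]
    have hterm : ∀ q ∈ (Finset.univ : Finset (Fin N)).offDiag,
        Real.log (torusDist (ψ q.1) (ψ q.2))⁻¹
          ≤ Real.log (torusDist (θ q.1) (θ q.2))⁻¹ + Real.log c⁻¹ := by
      intro q hq
      have hne : q.1 ≠ q.2 := (Finset.mem_offDiag.1 hq).2.2
      have hdx0 : torusDist (θ q.1) (θ q.2) ≠ 0 := by
        rw [hθdef, hθdef, ← hxx']
        exact hdist _ _ fun h => hne (σ.injective h)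
      have hdx : 0 < torusDist (θ q.1) (θ q.2) :=
        lt_of_le_of_ne (torusDist_nonneg _ _) (Ne.symm hdx0)
      have hcd := (pair' q.1 q.2 hne).1
      have hdy : 0 < torusDist (ψ q.1) (ψ q.2) := lt_of_lt_of_le (mul_pos hc hdx) hcd
      have hlog : Real.log (c * torusDist (θ q.1) (θ q.2))
          ≤ Real.log (torusDist (ψ q.1) (ψ q.2)) :=
        Real.log_le_log (mul_pos hc hdx) hcd
      rw [Real.log_mul hc.ne' hdx.ne'] at hlog
      rw [Real.log_inv, Real.log_inv, Real.log_inv]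
      linarith
    have hlogc0 : 0 ≤ Real.log c⁻¹ := by
      rw [Real.log_inv]
      linarith [Real.log_nonpos hc.le hc1]
    have hcinv : c⁻¹ = (2 * π + n * δ) / (2 * π) := by rw [hcdef, inv_div]
    have hlogup : Real.log c⁻¹ ≤ n * δ / (2 * π) := by
      have h := Real.log_le_sub_one_of_pos (show 0 < c⁻¹ by positivity)
      have h2 : (2 * π + n * δ) / (2 * π) - 1 = n * δ / (2 * π) := by field_simp; ring
      rw [hcinv] at h ⊢
      linarith
    have hcard : (((Finset.univ : Finset (Fin N)).offDiag.card : ℕ) : ℝ) ≤ n * n := by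
      rw [Finset.offDiag_card, Finset.card_univ, Fintype.card_fin, hndef]
      calc ((N * N - N : ℕ) : ℝ) ≤ ((N * N : ℕ) : ℝ) := by
            exact_mod_cast Nat.sub_le _ _
        _ = (N : ℝ) * N := by push_cast; ring
    have hπ3 : (3:ℝ) < π := Real.pi_gt_three
    have hbound : (((Finset.univ : Finset (Fin N)).offDiag.card : ℕ) : ℝ) * Real.log c⁻¹
        ≤ n := by
      calc (((Finset.univ : Finset (Fin N)).offDiag.card : ℕ) : ℝ) * Real.log c⁻¹
          ≤ (n * n) * (n * δ / (2 * π)) :=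
            mul_le_mul hcard hlogup hlogc0 (by nlinarith)
        _ = n / (4 * π) := by rw [hnδ]; field_simp; ring
        _ ≤ n := by
            rw [div_le_iff₀ (by positivity)]
            nlinarith
    have hfinal : ∑ q ∈ Finset.univ.offDiag, Real.log (torusDist (ψ q.1) (ψ q.2))⁻¹
        ≤ (∑ q ∈ Finset.univ.offDiag, Real.log (torusDist (θ q.1) (θ q.2))⁻¹) + n := by
      calc ∑ q ∈ Finset.univ.offDiag, Real.log (torusDist (ψ q.1) (ψ q.2))⁻¹
          ≤ ∑ q ∈ Finset.univ.offDiag,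
              (Real.log (torusDist (θ q.1) (θ q.2))⁻¹ + Real.log c⁻¹) :=
            Finset.sum_le_sum hterm
        _ = (∑ q ∈ Finset.univ.offDiag, Real.log (torusDist (θ q.1) (θ q.2))⁻¹)
              + ((Finset.univ : Finset (Fin N)).offDiag.card : ℝ) * Real.log c⁻¹ := by
            rw [Finset.sum_add_distrib, Finset.sum_const, nsmul_eq_mul]
        _ ≤ _ := by linarith [hbound]
    simp only []
    rw [← hstepy, ← hstepx]
    linarith [hfinal]
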